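/- Let u be an element of the free metabelian nilpotent of class c Lie algebra L_{n,c} such that the inner automorphism ε_u maps every symmetric element of L_{n,c} to a symmetric element. Then the linear part of u is a scalar multiple of x_1 + ⋯ + x_n; that is, there exists α ∈ K such that u − α(x_1 + ⋯ + x_n) lies in the commutator ideal L_{n,c}' = [L_{n,c}, L_{n,c}]. -/

import Mathlib

noncomputable section

open LieAlgebra LieModule

variable (K : Type*) [Field K] [CharZero K] (n c : ℕ)

/-- The free Lie algebra `L_n` of rank `n` over `K`. -/
abbrev L := FreeLieAlgebra K (Fin n)

/-- The generators `x_1, …, x_n` of `L_n`. -/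
def X (i : Fin n) : L K n := FreeLieAlgebra.of K i

/-- The automorphic action of a permutation `π ∈ S_n` on `L_n`, permuting the generators. -/
def permMap (π : Equiv.Perm (Fin n)) : L K n →ₗ⁅K⁆ L K n :=
  FreeLieAlgebra.lift K (fun i => FreeLieAlgebra.of K (π i))

/-- The ideal `L_n'' + γ^{c+1}(L_n)` (note `γ^{k+1}(L_n) = lowerCentralSeries K L_n L_n k`). -/
abbrev nilIdeal : LieIdeal K (L K n) :=
  derivedSeries K (L K n) 2 ⊔ lowerCentralSeries K (L K n) (L K n) c

/-- The free metabelian nilpotent of class `c` Lie algebra `L_{n,c} = L_n/(L_n'' + γ^{c+1}(L_n))`. -/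
abbrev Q := L K n ⧸ (nilIdeal K n c)

/-- The canonical projection `L_n → L_{n,c}`. -/
def Qmk : L K n → Q K n c := LieSubmodule.Quotient.mk

/-- The images `x_1, …, x_n` of the generators in `L_{n,c}`. -/
def Qx (i : Fin n) : Q K n c := Qmk K n c (X K n i)

/-- An element of `L_{n,c}` is symmetric if it is fixed by the induced action of every `π ∈ S_n`.
(The defining ideal is invariant under the `S_n`-action, so the action descends.) -/
def QIsSymm (p : Q K n c) : Prop :=
  ∀ π : Equiv.Perm (Fin n), ∀ a : L K n, Qmk K n c a = p → Qmk K n c (permMap K n π a) = p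

/-- The (right) adjoint operator `ad u : v ↦ [v, u]` on `L_{n,c}`. -/
def adr (u : Q K n c) : Module.End K (Q K n c) := -(LieAlgebra.ad K (Q K n c) u)

/-- The truncated exponential `ε_u = ∑_{k=0}^{c-1} (1/k!) (ad u)^k` on `L_{n,c}`. -/
def eps (u : Q K n c) : Module.End K (Q K n c) :=
  ∑ k ∈ Finset.range c, ((Nat.factorial k : K))⁻¹ • (adr K n c u) ^ k

section AuxAll
set_option linter.unusedSectionVars false
variable {K n c}

def VV (K : Type*) (n : ℕ) : Type _ := (Fin n → K) × (Fin n → Fin n → K)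
namespace VV
instance : AddCommGroup (VV K n) :=
  inferInstanceAs (AddCommGroup ((Fin n → K) × (Fin n → Fin n → K)))
instance : Module K (VV K n) :=
  inferInstanceAs (Module K ((Fin n → K) × (Fin n → Fin n → K)))
instance : LieRing (VV K n) where
  bracket x y := (0, fun i j => x.1 i * y.1 j - y.1 i * x.1 j)
  add_lie x y z := by
    refine Prod.ext ?_ ?_
    · show (0 : Fin n → K) = 0 + 0; simp
    · funext i j
      show (x.1 i + y.1 i) * z.1 j - z.1 i * (x.1 j + y.1 j)
          = (x.1 i * z.1 j - z.1 i * x.1 j) + (y.1 i * z.1 j - z.1 i * y.1 j)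
      ring
  lie_add x y z := by
    refine Prod.ext ?_ ?_
    · show (0 : Fin n → K) = 0 + 0; simp
    · funext i j
      show x.1 i * (y.1 j + z.1 j) - (y.1 i + z.1 i) * x.1 j
          = (x.1 i * y.1 j - y.1 i * x.1 j) + (x.1 i * z.1 j - z.1 i * x.1 j)
      ring
  lie_self x := by
    refine Prod.ext rfl ?_
    funext i j
    show x.1 i * x.1 j - x.1 i * x.1 j = 0
    ring
  leibniz_lie x y z := by
    refine Prod.ext ?_ ?_
    · show (0 : Fin n → K) = 0 + 0; simp
    · funext i j
      show x.1 i * (0:Fin n → K) j - (0:Fin n → K) i * x.1 j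
          = ((0:Fin n → K) i * z.1 j - z.1 i * (0:Fin n → K) j)
          + (y.1 i * (0:Fin n → K) j - (0:Fin n → K) i * y.1 j)
      simp
instance : LieAlgebra K (VV K n) where
  lie_smul t x y := by
    refine Prod.ext ?_ ?_
    · show (0 : Fin n → K) = t • 0; simp
    · funext i j
      show x.1 i * (t * y.1 j) - t * y.1 i * x.1 j = t * (x.1 i * y.1 j - y.1 i * x.1 j)
      ring
lemma bracket_fst (x y : VV K n) : (⁅x, y⁆ : VV K n).1 = 0 := rfl
lemma bracket_snd (x y : VV K n) (i j : Fin n) :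
    (⁅x, y⁆ : VV K n).2 i j = x.1 i * y.1 j - y.1 i * x.1 j := rfl

lemma lie_eq_zero_of_fst_eq_zero (x m : VV K n) (hm : m.1 = 0) : ⁅x, m⁆ = 0 := by
  refine Prod.ext rfl ?_
  funext i j
  rw [bracket_snd, hm]
  show x.1 i * (0:Fin n → K) j - (0:Fin n → K) i * x.1 j = (0 : VV K n).2 i j
  simp
  rfl

/-- first-component-zero ideal -/
def Z : LieIdeal K (VV K n) where
  carrier := {m | m.1 = 0}
  add_mem' := by
    intro a b ha hb
    show (a + b).1 = 0
    have : (a + b).1 = a.1 + b.1 := rfl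
    rw [this, ha, hb]; simp
  zero_mem' := rfl
  smul_mem' := by
    intro t a ha
    show (t • a).1 = 0
    have : (t • a).1 = t • a.1 := rfl
    rw [this, ha]; simp
  lie_mem := fun {x m} _ => bracket_fst x m

lemma mem_Z {m : VV K n} : m ∈ Z ↔ m.1 = 0 := Iff.rfl

lemma top_lie_top_le_Z : ⁅(⊤ : LieIdeal K (VV K n)), (⊤ : LieIdeal K (VV K n))⁆ ≤ Z := by
  rw [LieSubmodule.lie_le_iff]
  exact fun x _ m _ => bracket_fst x m

lemma top_lie_Z_le_bot : ⁅(⊤ : LieIdeal K (VV K n)), Z⁆ ≤ (⊥ : LieIdeal K (VV K n)) := by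
  rw [LieSubmodule.lie_le_iff]
  intro x _ m hm
  rw [LieSubmodule.mem_bot]
  exact lie_eq_zero_of_fst_eq_zero x m hm

lemma lcs_two_eq_bot : lowerCentralSeries K (VV K n) (VV K n) 2 = ⊥ := by
  rw [eq_bot_iff]
  calc lowerCentralSeries K (VV K n) (VV K n) 2
      = ⁅(⊤ : LieIdeal K (VV K n)), ⁅(⊤ : LieIdeal K (VV K n)), (⊤ : LieIdeal K (VV K n))⁆⁆ := by
        rw [LieModule.lowerCentralSeries_succ, LieModule.lowerCentralSeries_succ, LieModule.lowerCentralSeries_zero]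
    _ ≤ ⁅(⊤ : LieIdeal K (VV K n)), Z⁆ := LieSubmodule.mono_lie le_rfl top_lie_top_le_Z
    _ ≤ ⊥ := top_lie_Z_le_bot

lemma derived_two_eq_bot : derivedSeries K (VV K n) 2 = ⊥ := by
  rw [eq_bot_iff]
  calc derivedSeries K (VV K n) 2
      = ⁅derivedSeries K (VV K n) 1, derivedSeries K (VV K n) 1⁆ := by
        rw [derivedSeries_def, derivedSeriesOfIdeal_succ, ← derivedSeries_def]
    _ ≤ ⁅(⊤ : LieIdeal K (VV K n)), Z⁆ := by
        refine LieSubmodule.mono_lie le_top ?_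
        rw [show derivedSeries K (VV K n) 1 = ⁅(⊤ : LieIdeal K (VV K n)), ⊤⁆ by
          rw [derivedSeries_def, derivedSeriesOfIdeal_succ, derivedSeriesOfIdeal_zero]]
        exact top_lie_top_le_Z
    _ ≤ ⊥ := top_lie_Z_le_bot

lemma lie_zero_fst_left (m x : VV K n) (hm : m.1 = 0) : ⁅m, x⁆ = 0 := by
  refine Prod.ext rfl ?_
  funext i j
  rw [bracket_snd, hm]
  show (0:Fin n → K) i * x.1 j - x.1 i * (0:Fin n → K) j = (0 : VV K n).2 i j
  simp
  rfl

end VV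


open VV in
/-- permutation automorphism of `VV` -/
def sigmaV (π : Equiv.Perm (Fin n)) : VV K n →ₗ⁅K⁆ VV K n where
  toFun x := (x.1 ∘ π.symm, fun i j => x.2 (π.symm i) (π.symm j))
  map_add' x y := rfl
  map_smul' t x := rfl
  map_lie' {x y} := by
    refine Prod.ext ?_ ?_
    · rfl
    · funext i j
      show (⁅x, y⁆ : VV K n).2 (π.symm i) (π.symm j)
          = (x.1 ∘ π.symm) i * (y.1 ∘ π.symm) j - (y.1 ∘ π.symm) i * (x.1 ∘ π.symm) j
      rw [bracket_snd]
      rfl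

lemma sigmaV_apply (π : Equiv.Perm (Fin n)) (x : VV K n) :
    sigmaV π x = (x.1 ∘ π.symm, fun i j => x.2 (π.symm i) (π.symm j)) := rfl

/-- the evaluation hom `L → VV` -/
def phiV : L K n →ₗ⁅K⁆ VV K n :=
  FreeLieAlgebra.lift K (fun i => (Pi.single i (1:K), 0))

lemma phiV_X (i : Fin n) : phiV (X K n i) = ((Pi.single i (1:K) : Fin n → K), (0 : Fin n → Fin n → K)) := by
  simp [phiV, X]
  exact FreeLieAlgebra.lift_of_apply _ _

lemma sigmaV_comp_phiV (π : Equiv.Perm (Fin n)) :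
    (sigmaV π).comp (phiV (K := K) (n := n)) = phiV.comp (permMap K n π) := by
  apply FreeLieAlgebra.hom_ext
  intro i
  show sigmaV π (phiV (FreeLieAlgebra.of K i)) = phiV (permMap K n π (FreeLieAlgebra.of K i))
  rw [show permMap K n π (FreeLieAlgebra.of K i) = FreeLieAlgebra.of K (π i) by
    simp [permMap]]
  rw [show phiV (FreeLieAlgebra.of K i) = ((Pi.single i (1:K) : Fin n → K), (0 : Fin n → Fin n → K)) from phiV_X i,
    show phiV (FreeLieAlgebra.of K (π i)) = ((Pi.single (π i) (1:K) : Fin n → K), (0 : Fin n → Fin n → K)) from phiV_X (π i)]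
  refine Prod.ext ?_ rfl
  funext j
  simp only [sigmaV_apply, Function.comp_apply, Pi.single_apply, Equiv.symm_apply_eq]
  show (Pi.single i (1:K) : Fin n → K) (π.symm j) = _
  simp [Pi.single_apply, Equiv.symm_apply_eq]



open VV

lemma phiV_derived_one {z : L K n} (hz : z ∈ derivedSeries K (L K n) 1) :
    (phiV z).1 = 0 := by
  have h1 : phiV z ∈ (derivedSeries K (L K n) 1).map (phiV (K := K) (n := n)) :=
    LieIdeal.mem_map hz
  have h2 := LieIdeal.derivedSeries_map_le (f := phiV (K := K) (n := n)) 1 h1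
  have h3 : derivedSeries K (VV K n) 1 ≤ Z := by
    rw [show derivedSeries K (VV K n) 1 = ⁅(⊤ : LieIdeal K (VV K n)), ⊤⁆ by
      rw [derivedSeries_def, derivedSeriesOfIdeal_succ, derivedSeriesOfIdeal_zero]]
    exact top_lie_top_le_Z
  exact h3 h2

lemma phiV_nilIdeal_eq_zero (hc : 2 ≤ c) {a : L K n} (ha : a ∈ nilIdeal K n c) :
    phiV a = 0 := by
  rw [LieSubmodule.mem_sup] at ha
  obtain ⟨y, hy, z, hz, rfl⟩ := ha
  have h1 : phiV y = 0 := by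
    have hm := LieIdeal.derivedSeries_map_le (f := phiV (K := K) (n := n)) 2
      (LieIdeal.mem_map hy)
    rw [derived_two_eq_bot, LieSubmodule.mem_bot] at hm
    exact hm
  have h2 : phiV z = 0 := by
    have hm := LieIdeal.map_lowerCentralSeries_le (f := phiV (K := K) (n := n)) c
      (LieIdeal.mem_map hz)
    have hle : lowerCentralSeries K (VV K n) (VV K n) c
        ≤ lowerCentralSeries K (VV K n) (VV K n) 2 :=
      antitone_lowerCentralSeries K (VV K n) (VV K n) hc
    rw [lcs_two_eq_bot] at hle
    have := hle hm
    rwa [LieSubmodule.mem_bot] at this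
  rw [map_add, h1, h2, add_zero]

/-- `phiV` descends to the quotient. -/
def Qlift (hc : 2 ≤ c) : Q K n c →ₗ[K] VV K n :=
  Submodule.liftQ (nilIdeal K n c).toSubmodule phiV.toLinearMap
    (fun a ha => LinearMap.mem_ker.2 (phiV_nilIdeal_eq_zero hc ha))

lemma Qlift_mk (hc : 2 ≤ c) (a : L K n) : Qlift hc (Qmk K n c a) = phiV a := rfl

lemma Qmk_surjective : Function.Surjective (Qmk K n c) :=
  Submodule.Quotient.mk_surjective _

lemma Qmk_bracket (a b : L K n) :
    Qmk K n c ⁅a, b⁆ = ⁅Qmk K n c a, Qmk K n c b⁆ := rfl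

lemma Qlift_bracket (hc : 2 ≤ c) (p q : Q K n c) :
    Qlift hc ⁅p, q⁆ = ⁅Qlift hc p, Qlift hc q⁆ := by
  obtain ⟨a, rfl⟩ := Qmk_surjective (K := K) (n := n) (c := c) p
  obtain ⟨b, rfl⟩ := Qmk_surjective (K := K) (n := n) (c := c) q
  rw [← Qmk_bracket, Qlift_mk, Qlift_mk, Qlift_mk, phiV.map_lie]

/-- the projection as a Lie algebra morphism -/
def QmkLie : L K n →ₗ⁅K⁆ Q K n c where
  toFun := Qmk K n c
  map_add' _ _ := rfl
  map_smul' _ _ := rfl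
  map_lie' {_ _} := rfl

def adrV (x : VV K n) : Module.End K (VV K n) := -(LieAlgebra.ad K (VV K n) x)

lemma adrV_apply (x w : VV K n) : adrV x w = ⁅w, x⁆ := by
  rw [adrV, LinearMap.neg_apply, LieAlgebra.ad_apply]
  exact lie_skew w x

lemma adr_apply (u v : Q K n c) : adr K n c u v = ⁅v, u⁆ := by
  rw [adr, LinearMap.neg_apply, LieAlgebra.ad_apply]
  exact lie_skew v u

lemma Qlift_adr_pow (hc : 2 ≤ c) (u v : Q K n c) (k : ℕ) :
    Qlift hc (((adr K n c u) ^ k) v) = ((adrV (Qlift hc u)) ^ k) (Qlift hc v) := by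
  induction k with
  | zero => simp
  | succ k ih =>
    rw [pow_succ', Module.End.mul_apply, adr_apply, Qlift_bracket, ih, ← adrV_apply,
      ← Module.End.mul_apply, ← pow_succ']

lemma adrV_pow_of_two_le {x : VV K n} {k : ℕ} (hk : 2 ≤ k) (w : VV K n) :
    ((adrV x) ^ k) w = 0 := by
  obtain ⟨m, rfl⟩ : ∃ m, k = m + 2 := ⟨k - 2, by omega⟩
  have h2 : ((adrV x) ^ 2) w = 0 := by
    rw [pow_two, Module.End.mul_apply, adrV_apply, adrV_apply]
    exact VV.lie_zero_fst_left ⁅w, x⁆ x (VV.bracket_fst w x)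
  rw [pow_add, Module.End.mul_apply, h2, map_zero]

lemma Qlift_eps (hc : 2 ≤ c) (u v : Q K n c) :
    Qlift hc (eps K n c u v) = Qlift hc v + ⁅Qlift hc v, Qlift hc u⁆ := by
  have h0 : eps K n c u v
      = ∑ k ∈ Finset.range c, ((k.factorial : K))⁻¹ • (((adr K n c u) ^ k) v) := by
    rw [eps, LinearMap.sum_apply]
    exact Finset.sum_congr rfl fun k _ => LinearMap.smul_apply _ _ _
  rw [h0, map_sum]
  rw [Finset.sum_congr rfl (fun k _ => by rw [map_smul, Qlift_adr_pow hc] :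
    ∀ k ∈ Finset.range c, Qlift hc (((k.factorial : K))⁻¹ • (((adr K n c u) ^ k) v))
      = ((k.factorial : K))⁻¹ • ((adrV (Qlift hc u) ^ k) (Qlift hc v)))]
  have hsub : ({0, 1} : Finset ℕ) ⊆ Finset.range c := by
    intro k hk
    simp only [Finset.mem_insert, Finset.mem_singleton] at hk
    rw [Finset.mem_range]
    omega
  rw [← Finset.sum_subset hsub (fun k _ hk' => ?_)]
  · rw [Finset.sum_insert (by simp), Finset.sum_singleton]
    simp [adrV_apply]
  · have h2k : 2 ≤ k := by
      simp only [Finset.mem_insert, Finset.mem_singleton, not_or] at hk'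
      omega
    rw [adrV_pow_of_two_le h2k, smul_zero]

lemma permMap_X (π : Equiv.Perm (Fin n)) (i : Fin n) :
    permMap K n π (X K n i) = X K n (π i) := by
  simp [permMap, X]

lemma permMap_nilIdeal (π : Equiv.Perm (Fin n)) {a : L K n} (ha : a ∈ nilIdeal K n c) :
    permMap K n π a ∈ nilIdeal K n c := by
  rw [LieSubmodule.mem_sup] at ha ⊢
  obtain ⟨y, hy, z, hz, rfl⟩ := ha
  exact ⟨permMap K n π y, LieIdeal.derivedSeries_map_le 2 (LieIdeal.mem_map hy),
    permMap K n π z, LieIdeal.map_lowerCentralSeries_le c (LieIdeal.mem_map hz),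
    (map_add _ _ _).symm⟩

lemma Qmk_sum_X : Qmk K n c (∑ i, X K n i) = ∑ i, Qx K n c i := by
  show (nilIdeal K n c).toSubmodule.mkQ (∑ i, X K n i) = ∑ i, Qx K n c i
  rw [map_sum]
  rfl

lemma symm_sum : QIsSymm K n c (∑ i, Qx K n c i) := by
  intro π a ha
  have hmem : a - (∑ i, X K n i) ∈ nilIdeal K n c := by
    have h0 : Qmk K n c (a - (∑ i, X K n i)) = 0 := by
      show (nilIdeal K n c).toSubmodule.mkQ (a - (∑ i, X K n i)) = 0
      rw [map_sub]
      show Qmk K n c a - Qmk K n c (∑ i, X K n i) = 0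
      rw [ha, Qmk_sum_X, sub_self]
    exact (Submodule.Quotient.mk_eq_zero _).1 h0
  have hdecomp : permMap K n π a
      = permMap K n π (∑ i, X K n i) + permMap K n π (a - (∑ i, X K n i)) := by
    rw [← map_add]
    congr 1
    abel
  have h1 : Qmk K n c (permMap K n π (a - (∑ i, X K n i))) = 0 :=
    (Submodule.Quotient.mk_eq_zero _).2 (permMap_nilIdeal π hmem)
  have h2 : Qmk K n c (permMap K n π (∑ i, X K n i)) = ∑ i, Qx K n c i := by
    have hps : permMap K n π (∑ i, X K n i) = ∑ i, X K n (π i) := by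
      have := map_sum ((permMap K n π).toLinearMap) (fun i => X K n i) Finset.univ
      simp only [LieHom.coe_toLinearMap] at this
      rw [this]
      exact Finset.sum_congr rfl fun i _ => permMap_X π i
    rw [hps]
    show (nilIdeal K n c).toSubmodule.mkQ (∑ i, X K n (π i)) = ∑ i, Qx K n c i
    rw [map_sum]
    show (∑ i, Qx K n c (π i)) = ∑ i, Qx K n c i
    exact Equiv.sum_comp π (fun i => Qx K n c i)
  rw [hdecomp]
  show (nilIdeal K n c).toSubmodule.mkQ (permMap K n π (∑ i, X K n i)
      + permMap K n π (a - (∑ i, X K n i))) = ∑ i, Qx K n c i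
  rw [map_add]
  show Qmk K n c (permMap K n π (∑ i, X K n i))
      + Qmk K n c (permMap K n π (a - (∑ i, X K n i))) = ∑ i, Qx K n c i
  rw [h1, h2, add_zero]

/-- the subalgebra generated linearly by the `X i` and the derived ideal -/
def genSub : LieSubalgebra K (L K n) :=
  { (Submodule.span K (Set.range (X K n)) ⊔ (derivedSeries K (L K n) 1).toSubmodule :
      Submodule K (L K n)) with
    lie_mem' := by
      intro x y _ _
      refine Submodule.mem_sup_right ?_
      rw [LieSubmodule.mem_toSubmodule]
      rw [derivedSeries_def, derivedSeriesOfIdeal_succ, derivedSeriesOfIdeal_zero]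
      exact LieSubmodule.lie_mem_lie (LieSubmodule.mem_top x) (LieSubmodule.mem_top y) }

lemma mem_genSub (a : L K n) : a ∈ genSub (K := K) (n := n) := by
  have hX : ∀ i, X K n i ∈ genSub (K := K) (n := n) := fun i =>
    Submodule.mem_sup_left (Submodule.subset_span ⟨i, rfl⟩)
  let g : L K n →ₗ⁅K⁆ genSub (K := K) (n := n) :=
    FreeLieAlgebra.lift K (fun i => ⟨X K n i, hX i⟩)
  have hcomp : (genSub (K := K) (n := n)).incl.comp g = LieHom.id := by
    apply FreeLieAlgebra.hom_ext
    intro i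
    show (genSub (K := K) (n := n)).incl (g (FreeLieAlgebra.of K i)) = FreeLieAlgebra.of K i
    rw [show g (FreeLieAlgebra.of K i) = ⟨X K n i, hX i⟩ from FreeLieAlgebra.lift_of_apply _ _]
    rfl
  have h1 : (genSub (K := K) (n := n)).incl (g a) = a := DFunLike.congr_fun hcomp a
  have h2 : ((g a : L K n)) = a := h1
  rw [← h2]
  exact (g a).2

/-- first component of `VV` as a linear map -/
def fstL : VV K n →ₗ[K] (Fin n → K) where
  toFun x := x.1
  map_add' _ _ := rfl
  map_smul' _ _ := rfl

lemma Qlift_sQ (hc : 2 ≤ c) :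
    Qlift hc (∑ i, Qx K n c i) = ((fun _ => (1 : K)), (0 : Fin n → Fin n → K)) := by
  rw [← Qmk_sum_X, Qlift_mk]
  have h1 := map_sum (phiV (K := K) (n := n)).toLinearMap (fun i => X K n i) Finset.univ
  simp only [LieHom.coe_toLinearMap] at h1
  rw [h1]
  rw [Finset.sum_congr rfl (fun i _ => phiV_X i)]
  refine Prod.ext ?_ ?_
  · have h2 := map_sum (fstL (K := K) (n := n))
      (fun i => (((Pi.single i (1:K)) : Fin n → K), (0 : Fin n → Fin n → K))) Finset.univ
    have h3 : (∑ i, (((Pi.single i (1:K)) : Fin n → K), (0 : Fin n → Fin n → K)) : VV K n).1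
        = ∑ i, Pi.single i (1:K) := h2
    rw [h3]
    funext j
    simp [Finset.sum_apply, Pi.single_apply]
  · have h4 : ∀ (s : Finset (Fin n)), ((∑ i ∈ s, (((Pi.single i (1:K)) : Fin n → K), (0 : Fin n → Fin n → K)) : VV K n)).2 = 0 := by
      intro s
      induction s using Finset.induction with
      | empty => rfl
      | insert _ _ hni ih =>
        erw [Finset.sum_insert hni]
        show (0 : Fin n → Fin n → K) + _ = 0
        rw [ih, add_zero]
    exact h4 Finset.univ

end AuxAll

/-- If `u ∈ L_{n,c}` is such that the inner automorphism `ε_u` maps every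
symmetric element of `L_{n,c}` to a symmetric element, then the linear part of `u` is a scalar
multiple of `x_1 + ⋯ + x_n`: there is `α ∈ K` with `u − α(x_1 + ⋯ + x_n)` in the commutator
ideal `L_{n,c}' = [L_{n,c}, L_{n,c}]`. -/
theorem eps_preserves_symm_imp_linear_part {K : Type*} [Field K] [CharZero K] {n c : ℕ}
    (hn : 2 ≤ n) (hc : 2 ≤ c) (u : Q K n c)
    (h : ∀ v : Q K n c, QIsSymm K n c v → QIsSymm K n c (eps K n c u v)) :
    ∃ α : K, u - α • (∑ i : Fin n, Qx K n c i) ∈ derivedSeries K (Q K n c) 1 := by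
  classical
  obtain ⟨au, hau⟩ := Qmk_surjective (K := K) (n := n) (c := c) u
  have hmem : au ∈ (Submodule.span K (Set.range (X K n))
      ⊔ (derivedSeries K (L K n) 1).toSubmodule : Submodule K (L K n)) :=
    mem_genSub au
  obtain ⟨y, hy, z, hz', hyz⟩ := Submodule.mem_sup.1 hmem
  have hz : z ∈ derivedSeries K (L K n) 1 := hz'
  obtain ⟨co, hco⟩ := (Submodule.mem_span_range_iff_exists_fun K).1 hy
  set sQ : Q K n c := ∑ i, Qx K n c i with hsQ
  have hsymm := h sQ (symm_sum)
  have key : ∀ π : Equiv.Perm (Fin n),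
      sigmaV π (Qlift hc (eps K n c u sQ)) = Qlift hc (eps K n c u sQ) := by
    intro π
    obtain ⟨t, ht⟩ := Qmk_surjective (K := K) (n := n) (c := c) (eps K n c u sQ)
    have h1 := hsymm π t ht
    calc sigmaV π (Qlift hc (eps K n c u sQ))
        = sigmaV π (phiV t) := by rw [← ht, Qlift_mk]
      _ = phiV (permMap K n π t) := DFunLike.congr_fun (sigmaV_comp_phiV π) t
      _ = Qlift hc (Qmk K n c (permMap K n π t)) := (Qlift_mk hc _).symm
      _ = Qlift hc (eps K n c u sQ) := by rw [h1]
  set U : VV K n := Qlift hc u with hU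
  -- first component of U is co
  have hU1 : U.1 = co := by
    rw [hU, ← hau, Qlift_mk, ← hyz, map_add]
    have hadd : ((phiV y + phiV z : VV K n)).1 = (phiV y).1 + (phiV z).1 := rfl
    rw [hadd, phiV_derived_one hz, add_zero, ← hco]
    have h1 := map_sum (phiV (K := K) (n := n)).toLinearMap
      (fun i => co i • X K n i) Finset.univ
    simp only [LieHom.coe_toLinearMap] at h1
    rw [h1]
    have h2 := map_sum (fstL (K := K) (n := n)) (fun i => phiV (co i • X K n i)) Finset.univ
    have h3 : ((∑ i, phiV (co i • X K n i) : VV K n)).1 = ∑ i, (phiV (co i • X K n i)).1 := h2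
    rw [h3]
    funext j
    have h4 : ∀ i, (phiV (co i • X K n i)).1 = co i • (Pi.single i (1:K) : Fin n → K) := by
      intro i
      rw [map_smul, phiV_X]
      rfl
    rw [Finset.sum_apply]
    rw [Finset.sum_congr rfl fun i _ => congrFun (h4 i) j]
    simp [Pi.single_apply, mul_ite]
  -- all components of U.1 are equal
  have heq : ∀ a b : Fin n, U.1 a = U.1 b := by
    intro a b
    have hk := key (Equiv.swap a b)
    have he : Qlift hc (eps K n c u sQ) = Qlift hc sQ + ⁅Qlift hc sQ, U⁆ := Qlift_eps hc u sQ
    have hQs := Qlift_sQ (K := K) (n := n) hc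
    rw [he, hsQ] at hk
    rw [hQs] at hk
    set S : VV K n := ((fun _ => (1 : K)), (0 : Fin n → Fin n → K)) with hS
    have hcomp : ∀ i j : Fin n, ((S + ⁅S, U⁆ : VV K n)).2 i j = U.1 j - U.1 i := by
      intro i j
      show (0 : Fin n → Fin n → K) i j + ((fun _ => (1:K)) i * U.1 j - U.1 i * (fun _ => (1:K)) j)
          = U.1 j - U.1 i
      simp
    have hswap : ∀ i j : Fin n,
        ((S + ⁅S, U⁆ : VV K n)).2 ((Equiv.swap a b).symm i) ((Equiv.swap a b).symm j)
        = ((S + ⁅S, U⁆ : VV K n)).2 i j := fun i j => congrFun (congrFun (congrArg Prod.snd hk) i) j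
    have h5 := hswap a b
    rw [Equiv.symm_swap, Equiv.swap_apply_left, Equiv.swap_apply_right] at h5
    rw [hcomp, hcomp] at h5
    -- h5 : U.1 a - U.1 b = U.1 b - U.1 a
    linear_combination h5 / 2
  have i0 : Fin n := ⟨0, by omega⟩
  refine ⟨co i0, ?_⟩
  have hall : ∀ i, co i = co i0 := by
    intro i
    have := heq i i0
    rw [hU1] at this
    exact this
  have hfinal : u - (co i0) • (∑ i, Qx K n c i) = Qmk K n c z := by
    rw [← hau, ← Qmk_sum_X, ← hyz]
    show (nilIdeal K n c).toSubmodule.mkQ (y + z)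
        - (co i0) • (nilIdeal K n c).toSubmodule.mkQ (∑ i, X K n i)
        = (nilIdeal K n c).toSubmodule.mkQ z
    rw [← map_smul, ← map_sub]
    congr 1
    have hy' : y = (co i0) • ∑ i, X K n i := by
      rw [← hco, Finset.smul_sum]
      exact Finset.sum_congr rfl fun i _ => by rw [hall i]
    rw [hy']
    abel
  rw [hfinal]
  exact LieIdeal.derivedSeries_map_le (f := QmkLie (K := K) (n := n) (c := c)) 1
    (LieIdeal.mem_map hz)
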